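/- Let n ≥ 1 and let S_n be the star graph on vertices {0,1,...,n-1}. An injective partial transformation α of {0,1,...,n-1} is a partial automorphism of S_n if and only if one of the following holds: (1) 0 ∉ dom(α) and either im(α) = {0} or im(α) ⊆ {1,...,n-1}; (2) 0 ∈ dom(α) and 0α = 0; (3) 0 ∈ dom(α), 0α ≠ 0, and α maps dom(α) ∩ {1,...,n-1} into {0}. -/

import Mathlib

def pmul {V : Type*} (f g : V → Option V) : V → Option V := fun x => (f x).bind g

def pdom {V : Type*} (f : V → Option V) : Set V := {x | f x ≠ none}

def pim {V : Type*} (f : V → Option V) : Set V := {y | ∃ x, f x = some y}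

def pker {V : Type*} (f : V → Option V) : V → V → Prop := fun x y => f x ≠ none ∧ f x = f y

def PInj {V : Type*} (f : V → Option V) : Prop := ∀ u v a, f u = some a → f v = some a → u = v

def edge {n : ℕ} (u v : Fin n) : Prop := (u.val = 0 ∧ v.val ≠ 0) ∨ (v.val = 0 ∧ u.val ≠ 0)

def IsPEnd {n : ℕ} (α : Fin n → Option (Fin n)) : Prop :=
  ∀ u v a b, α u = some a → α v = some b → edge u v → edge a b

def IsPwEnd {n : ℕ} (α : Fin n → Option (Fin n)) : Prop :=
  ∀ u v a b, α u = some a → α v = some b → edge u v → a ≠ b → edge a b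

def IsPsEnd {n : ℕ} (α : Fin n → Option (Fin n)) : Prop :=
  ∀ u v a b, α u = some a → α v = some b → (edge u v ↔ edge a b)

def IsPswEnd {n : ℕ} (α : Fin n → Option (Fin n)) : Prop :=
  ∀ u v a b, α u = some a → α v = some b → ((edge u v ∧ a ≠ b) ↔ edge a b)

def PEndS (n : ℕ) : Set (Fin n → Option (Fin n)) := {α | IsPEnd α}
def PwEndS (n : ℕ) : Set (Fin n → Option (Fin n)) := {α | IsPwEnd α}
def PsEndS (n : ℕ) : Set (Fin n → Option (Fin n)) := {α | IsPsEnd α}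
def PswEndS (n : ℕ) : Set (Fin n → Option (Fin n)) := {α | IsPswEnd α}
def IEndS (n : ℕ) : Set (Fin n → Option (Fin n)) := {α | PInj α ∧ IsPEnd α}
def PAutS (n : ℕ) : Set (Fin n → Option (Fin n)) := {α | PInj α ∧ IsPsEnd α}

def RegularIn {V : Type*} (M : Set (V → Option V)) (a : V → Option V) : Prop :=
  ∃ b ∈ M, pmul (pmul a b) a = a

def GreenL {V : Type*} (M : Set (V → Option V)) (a b : V → Option V) : Prop :=
  (∃ g ∈ M, a = pmul g b) ∧ (∃ g ∈ M, b = pmul g a)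

def GreenR {V : Type*} (M : Set (V → Option V)) (a b : V → Option V) : Prop :=
  (∃ g ∈ M, a = pmul b g) ∧ (∃ g ∈ M, b = pmul a g)

def GreenH {V : Type*} (M : Set (V → Option V)) (a b : V → Option V) : Prop :=
  GreenL M a b ∧ GreenR M a b

def GreenJ {V : Type*} (M : Set (V → Option V)) (a b : V → Option V) : Prop :=
  (∃ g ∈ M, ∃ h ∈ M, a = pmul (pmul g b) h) ∧ (∃ g ∈ M, ∃ h ∈ M, b = pmul (pmul g a) h)

lemma edge_iff {n : ℕ} (hn : 1 ≤ n) (u v : Fin n) :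
    edge u v ↔ (u = ⟨0, hn⟩ ∧ v ≠ ⟨0, hn⟩) ∨ (v = ⟨0, hn⟩ ∧ u ≠ ⟨0, hn⟩) := by
  simp [edge, Fin.ext_iff]

theorem stmt8 (n : ℕ) (hn : 1 ≤ n) (α : Fin n → Option (Fin n)) (hinj : PInj α) :
    α ∈ PAutS n ↔
      (((⟨0, hn⟩ : Fin n) ∉ pdom α
          ∧ (pim α = {(⟨0, hn⟩ : Fin n)} ∨ pim α ⊆ {x : Fin n | x ≠ ⟨0, hn⟩}))
        ∨ α ⟨0, hn⟩ = some ⟨0, hn⟩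
        ∨ (∃ b : Fin n, α ⟨0, hn⟩ = some b ∧ b ≠ ⟨0, hn⟩
            ∧ ∀ x a : Fin n, x ≠ ⟨0, hn⟩ → α x = some a → a = ⟨0, hn⟩)) := by
  classical
  set z : Fin n := ⟨0, hn⟩ with hzdef
  constructor
  · rintro ⟨-, hps⟩
    rcases h0 : α z with _ | b
    · left
      refine ⟨fun h => h h0, ?_⟩
      by_cases hc : z ∈ pim α
      · left
        obtain ⟨x, hx⟩ := hc
        ext c
        simp only [Set.mem_singleton_iff]
        constructor
        · rintro ⟨y, hy⟩
          by_contra hcne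
          have hxz : x ≠ z := by rintro rfl; rw [h0] at hx; exact nomatch hx
          have hyz : y ≠ z := by rintro rfl; rw [h0] at hy; exact nomatch hy
          have he : edge y x := by
            rw [(hps y x c z hy hx), edge_iff hn]
            exact Or.inr ⟨rfl, hcne⟩
          rw [edge_iff hn] at he
          rcases he with ⟨h1, _⟩ | ⟨h1, _⟩
          · exact hyz h1
          · exact hxz h1
        · rintro rfl; exact ⟨x, hx⟩
      · right
        rintro c ⟨y, hy⟩ h
        exact hc ⟨y, by rw [hy, h]⟩
    · by_cases hb : b = z
      · right; left; exact congrArg some hb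
      · right; right
        refine ⟨b, rfl, hb, fun x a hx ha => ?_⟩
        have hxz : x ≠ z := hx
        have he : edge b a := by
          rw [← hps z x b a h0 ha, edge_iff hn]
          exact Or.inl ⟨rfl, hxz⟩
        rw [edge_iff hn] at he
        rcases he with ⟨h1, _⟩ | ⟨h1, _⟩
        · exact absurd h1 hb
        · exact h1
  · rintro (⟨hdom, him⟩ | h0 | ⟨b, h0, hb, hmap⟩)
    · refine ⟨hinj, fun u v a c hu hv => ?_⟩
      have huz : u ≠ z := by rintro rfl; exact hdom (by simp [pdom, hu])
      have hvz : v ≠ z := by rintro rfl; exact hdom (by simp [pdom, hv])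
      rw [edge_iff hn, edge_iff hn]
      constructor
      · rintro (⟨h1, _⟩ | ⟨h1, _⟩)
        · exact absurd h1 huz
        · exact absurd h1 hvz
      · rintro h
        exfalso
        rcases him with him | him
        · have ha : a = z := by
            have : a ∈ pim α := ⟨u, hu⟩
            rw [him] at this; exact this
          have hc : c = z := by
            have : c ∈ pim α := ⟨v, hv⟩
            rw [him] at this; exact this
          rcases h with ⟨h1, h2⟩ | ⟨h1, h2⟩
          · exact h2 hc
          · exact h2 ha
        · have ha : a ≠ z := him ⟨u, hu⟩
          have hc : c ≠ z := him ⟨v, hv⟩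
          rcases h with ⟨h1, _⟩ | ⟨h1, _⟩
          · exact ha h1
          · exact hc h1
    · refine ⟨hinj, fun u v a c hu hv => ?_⟩
      have key : ∀ x d, α x = some d → (x = z ↔ d = z) := by
        intro x d hx
        constructor
        · rintro rfl
          rw [h0] at hx; exact (Option.some_injective _ hx).symm
        · rintro rfl
          exact hinj x z z hx h0
      rw [edge_iff hn, edge_iff hn]
      simp only [← hzdef, Ne, key u a hu, key v c hv]
    · refine ⟨hinj, fun u v a c hu hv => ?_⟩
      have key : ∀ x d, α x = some d → (x = z ↔ d ≠ z) := by
        intro x d hx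
        by_cases hxz : x = z
        · subst hxz
          rw [h0] at hx
          simp [← Option.some_injective _ hx, hb]
        · simp [hxz, hmap x d hxz hx]
      rw [edge_iff hn, edge_iff hn]
      simp only [← hzdef, Ne, key u a hu, key v c hv]
      tauto
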